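/- Suppose player X's objective is fairness V(p,q) = -|π_X(p,q) - π_Y(p,q)|, with p ∈ (0,1)⁵, q ∈ [0,1]⁵, and assume the local-improvement property holds for weighted payoff objectives (as in the interior local-improvement proposition). If player X cannot locally improve its fairness objective, then the payoffs must already be equal: π_X(p,q) = π_Y(p,q). -/

import Mathlib

open Matrix Filter

noncomputable section

/-- Row of the transition matrix for cooperation probabilities `a` (player X) and `b` (player Y). -/
def row2 (a b : ℝ) : Fin 4 → ℝ := ![a * b, a * (1 - b), (1 - a) * b, (1 - a) * (1 - b)]

/-- Initial distribution over the four states CC, CD, DC, DD. -/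
def nu0 (p q : Fin 5 → ℝ) : Fin 4 → ℝ := row2 (p 0) (q 0)

/-- Transition matrix `M(p,q)` of the repeated game for memory-one strategies. -/
def Mmat (p q : Fin 5 → ℝ) : Matrix (Fin 4) (Fin 4) ℝ :=
  Matrix.of ![row2 (p 1) (q 1), row2 (p 2) (q 3), row2 (p 3) (q 2), row2 (p 4) (q 4)]

/-- Discounted average state distribution `v = (1-λ)·ν₀·(I - λM)⁻¹`. -/
def vdist (lam : ℝ) (p q : Fin 5 → ℝ) : Fin 4 → ℝ :=
  (1 - lam) • Matrix.vecMul (nu0 p q) (1 - lam • Mmat p q)⁻¹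

/-- A memory-one strategy: all five entries lie in `[0,1]`. -/
def inCube (p : Fin 5 → ℝ) : Prop := ∀ i, p i ∈ Set.Icc (0:ℝ) 1

/-- Discounted repeated-game payoff with one-shot payoff vector `u`. -/
def pay (lam : ℝ) (p q : Fin 5 → ℝ) (u : Fin 4 → ℝ) : ℝ :=
  dotProduct (vdist lam p q) u

/-- One-shot payoff vector of player X. -/
def uvecX (R S T P : ℝ) : Fin 4 → ℝ := ![R, S, T, P]

/-- One-shot payoff vector of player Y. -/
def uvecY (R S T P : ℝ) : Fin 4 → ℝ := ![R, T, S, P]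

lemma row2_nonneg {a b : ℝ} (ha : a ∈ Set.Icc (0:ℝ) 1) (hb : b ∈ Set.Icc (0:ℝ) 1) (j : Fin 4) :
    0 ≤ row2 a b j := by
  obtain ⟨ha0, ha1⟩ := ha; obtain ⟨hb0, hb1⟩ := hb
  fin_cases j <;> simp [row2] <;> nlinarith

lemma row2_sum (a b : ℝ) : ∑ j, row2 a b j = 1 := by
  simp [row2, Fin.sum_univ_four]; ring

lemma Mmat_nonneg {p q : Fin 5 → ℝ} (hp : inCube p) (hq : inCube q) (i j : Fin 4) :
    0 ≤ Mmat p q i j := by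
  fin_cases i <;> exact row2_nonneg (hp _) (hq _) j

lemma Mmat_row_sum (p q : Fin 5 → ℝ) (i : Fin 4) : ∑ j, Mmat p q i j = 1 := by
  fin_cases i <;> exact row2_sum _ _

lemma det_ne {lam : ℝ} {p q : Fin 5 → ℝ} (hlam : lam ∈ Set.Ico (0:ℝ) 1)
    (hp : inCube p) (hq : inCube q) : (1 - lam • Mmat p q).det ≠ 0 := by
  intro h
  obtain ⟨v, hv, hmv⟩ := (Matrix.exists_mulVec_eq_zero_iff).mpr h
  have key : ∀ i, v i = lam * ∑ j, Mmat p q i j * v j := by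
    intro i
    have h0 := congrFun hmv i
    simp only [Matrix.sub_mulVec, Matrix.smul_mulVec, Matrix.one_mulVec,
      Pi.sub_apply, Pi.smul_apply, smul_eq_mul, Pi.zero_apply, sub_eq_zero] at h0
    rw [h0]
    simp [Matrix.mulVec, dotProduct, Finset.mul_sum]
  obtain ⟨i₀, -, hmax⟩ := Finset.exists_max_image Finset.univ (fun i => |v i|)
    ⟨0, Finset.mem_univ _⟩
  have hmax' : ∀ j, |v j| ≤ |v i₀| := fun j => hmax j (Finset.mem_univ _)
  have hpos : 0 < |v i₀| := by
    obtain ⟨k, hk⟩ := Function.ne_iff.mp hv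
    exact lt_of_lt_of_le (abs_pos.mpr hk) (hmax' k)
  have hb : |v i₀| ≤ lam * |v i₀| := by
    calc |v i₀| = |lam * ∑ j, Mmat p q i₀ j * v j| := by rw [← key i₀]
    _ = lam * |∑ j, Mmat p q i₀ j * v j| := by rw [abs_mul, abs_of_nonneg hlam.1]
    _ ≤ lam * ∑ j, Mmat p q i₀ j * |v j| := by
        apply mul_le_mul_of_nonneg_left _ hlam.1
        refine (Finset.abs_sum_le_sum_abs _ _).trans ?_
        apply Finset.sum_le_sum
        intro j _
        rw [abs_mul, abs_of_nonneg (Mmat_nonneg hp hq i₀ j)]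
    _ ≤ lam * ∑ j, Mmat p q i₀ j * |v i₀| := by
        apply mul_le_mul_of_nonneg_left _ hlam.1
        exact Finset.sum_le_sum fun j _ =>
          mul_le_mul_of_nonneg_left (hmax' j) (Mmat_nonneg hp hq i₀ j)
    _ = lam * |v i₀| := by rw [← Finset.sum_mul, Mmat_row_sum]; ring
  nlinarith [hlam.2]

lemma pay_contAt {lam : ℝ} {p q : Fin 5 → ℝ} (u : Fin 4 → ℝ)
    (hdet : (1 - lam • Mmat p q).det ≠ 0) :
    ContinuousAt (fun p' => pay lam p' q u) p := by
  have hM : Continuous fun p' : Fin 5 → ℝ => Mmat p' q := by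
    apply continuous_matrix
    intro i j
    fin_cases i <;> fin_cases j <;> (simp [Mmat, row2]; fun_prop)
  have hA : Continuous fun p' : Fin 5 → ℝ => (1 : Matrix (Fin 4) (Fin 4) ℝ) - lam • Mmat p' q :=
    continuous_const.sub (hM.const_smul lam)
  have hinv0 : ContinuousAt Ring.inverse ((1 - lam • Mmat p q).det) := by
    rw [Ring.inverse_eq_inv']
    exact continuousAt_inv₀ hdet
  have hInv : ContinuousAt (fun p' => (1 - lam • Mmat p' q)⁻¹) p :=
    Filter.Tendsto.comp (continuousAt_matrix_inv _ hinv0) hA.continuousAt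
  have hnu : Continuous fun p' : Fin 5 → ℝ => nu0 p' q := by
    apply continuous_pi
    intro i
    fin_cases i <;> (simp [nu0, row2]; fun_prop)
  have hg : Continuous fun x : (Fin 4 → ℝ) × Matrix (Fin 4) (Fin 4) ℝ =>
      dotProduct ((1 - lam) • (x.1 ᵥ* x.2)) u :=
    ((continuous_fst.matrix_vecMul continuous_snd).const_smul (1 - lam)).dotProduct
      continuous_const
  have := hg.continuousAt.comp (hnu.continuousAt.prodMk hInv)
  simp only [pay, vdist]
  exact this

lemma pay_symm (lam R S T P : ℝ) (q : Fin 5 → ℝ) :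
    pay lam q q (uvecX R S T P) = pay lam q q (uvecY R S T P) := by
  set σ : Fin 4 ≃ Fin 4 := Equiv.swap 1 2 with hσ
  have hσσ : ∀ x, σ (σ x) = x := fun x => Equiv.swap_apply_self 1 2 x
  have e0 : σ 0 = 0 := by rw [hσ]; decide
  have e1 : σ 1 = 2 := by rw [hσ]; decide
  have e2 : σ 2 = 1 := by rw [hσ]; decide
  have e3 : σ 3 = 3 := by rw [hσ]; decide
  have hMsub : ∀ i j, Mmat q q (σ i) (σ j) = Mmat q q i j := by
    intro i j
    fin_cases i <;> fin_cases j <;> simp [e0, e1, e2, e3, Mmat, row2] <;> ring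
  have hnu : ∀ i, nu0 q q (σ i) = nu0 q q i := by
    intro i
    fin_cases i <;> simp [e0, e1, e2, e3, nu0, row2] <;> ring
  have hAsub : (1 - lam • Mmat q q).submatrix σ σ = 1 - lam • Mmat q q := by
    have h1 := Matrix.submatrix_one_equiv (α := ℝ) σ
    ext i j
    have he1 : (1 : Matrix (Fin 4) (Fin 4) ℝ) (σ i) (σ j) = (1 : Matrix (Fin 4) (Fin 4) ℝ) i j := by
      have := congrFun (congrFun h1 i) j
      simpa [Matrix.submatrix_apply] using this
    simp only [Matrix.submatrix_apply, Matrix.sub_apply, Matrix.smul_apply, smul_eq_mul, he1,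
      hMsub i j]
  set B := (1 - lam • Mmat q q)⁻¹ with hB
  have h2 : B.submatrix σ σ = B := by
    rw [hB, ← Matrix.inv_submatrix_equiv, hAsub]
  have hBsub : ∀ i j, B (σ i) (σ j) = B i j := fun i j => congrFun (congrFun h2 i) j
  have hw : ∀ j, vecMul (nu0 q q) B (σ j) = vecMul (nu0 q q) B j := by
    intro j
    simp only [Matrix.vecMul, dotProduct]
    rw [← Equiv.sum_comp σ (fun i => nu0 q q i * B i j)]
    refine Finset.sum_congr rfl fun i _ => ?_
    rw [hnu i, ← hBsub i (σ j), hσσ j]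
  have huv : ∀ j, uvecY R S T P j = uvecX R S T P (σ j) := by
    intro j
    fin_cases j <;> simp [e0, e1, e2, e3, uvecX, uvecY]
  simp only [pay, vdist, dotProduct, ← hB]
  rw [← Equiv.sum_comp σ (fun j => ((1 - lam) • vecMul (nu0 q q) B) j * uvecX R S T P j)]
  refine Finset.sum_congr rfl fun j _ => ?_
  simp only [Pi.smul_apply, smul_eq_mul, hw j, ← huv j]

theorem fairness_rest_point_equal_payoffs
    (R S T P lam : ℝ) (hlam : lam ∈ Set.Ico (0:ℝ) 1)
    (p q : Fin 5 → ℝ) (hp : ∀ i, p i ∈ Set.Ioo (0:ℝ) 1) (hq : inCube q)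
    (hLI : ∀ κX κY : ℝ, ∀ p₁ : Fin 5 → ℝ, (∀ i, p₁ i ∈ Set.Ioo (0:ℝ) 1) →
      (∃ pb, inCube pb ∧
        κX * pay lam p₁ q (uvecX R S T P) + κY * pay lam p₁ q (uvecY R S T P) <
          κX * pay lam pb q (uvecX R S T P) + κY * pay lam pb q (uvecY R S T P)) →
      ∀ d > (0:ℝ), ∃ p₂, inCube p₂ ∧ (∀ i, |p₂ i - p₁ i| < d) ∧
        κX * pay lam p₁ q (uvecX R S T P) + κY * pay lam p₁ q (uvecY R S T P) <
          κX * pay lam p₂ q (uvecX R S T P) + κY * pay lam p₂ q (uvecY R S T P))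
    (hno : ∃ d₀ > (0:ℝ), ∀ p', inCube p' → (∀ i, |p' i - p i| < d₀) →
      -|pay lam p' q (uvecX R S T P) - pay lam p' q (uvecY R S T P)| ≤
        -|pay lam p q (uvecX R S T P) - pay lam p q (uvecY R S T P)|) :
    pay lam p q (uvecX R S T P) = pay lam p q (uvecY R S T P) := by
  by_contra hne
  obtain ⟨d₀, hd₀, hno'⟩ := hno
  have hpc : inCube p := fun i => ⟨(hp i).1.le, (hp i).2.le⟩
  have hdet := det_ne hlam hpc hq
  have hcont : ContinuousAt
      (fun p' => pay lam p' q (uvecX R S T P) - pay lam p' q (uvecY R S T P)) p :=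
    (pay_contAt _ hdet).sub (pay_contAt _ hdet)
  have hDne : pay lam p q (uvecX R S T P) - pay lam p q (uvecY R S T P) ≠ 0 :=
    sub_ne_zero.mpr hne
  obtain ⟨δ, hδpos, hδ⟩ := Metric.continuousAt_iff.mp hcont
    |pay lam p q (uvecX R S T P) - pay lam p q (uvecY R S T P)| (abs_pos.mpr hDne)
  have hdpos : (0:ℝ) < min δ d₀ := lt_min hδpos hd₀
  have hsymm := pay_symm lam R S T P q
  rcases hDne.lt_or_gt with hDneg | hDpos
  · -- πX < πY : use κ = (1, -1)
    obtain ⟨p₂, hc₂, hclose, hlt⟩ := hLI 1 (-1) p hp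
      ⟨q, hq, by linarith⟩ (min δ d₀) hdpos
    have hdist : dist p₂ p < δ := by
      rw [dist_pi_lt_iff hδpos]
      intro i
      rw [Real.dist_eq]
      exact lt_of_lt_of_le (hclose i) (min_le_left _ _)
    have hfd := hδ hdist
    rw [Real.dist_eq] at hfd
    have h1 := abs_lt.mp hfd
    have habsD : |pay lam p q (uvecX R S T P) - pay lam p q (uvecY R S T P)| =
        -(pay lam p q (uvecX R S T P) - pay lam p q (uvecY R S T P)) := abs_of_neg hDneg
    have hf2neg : pay lam p₂ q (uvecX R S T P) - pay lam p₂ q (uvecY R S T P) < 0 := by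
      rw [habsD] at h1
      linarith [h1.2]
    have hno2 := hno' p₂ hc₂ (fun i => lt_of_lt_of_le (hclose i) (min_le_right _ _))
    rw [abs_of_neg hf2neg, habsD] at hno2
    linarith
  · -- πX > πY : use κ = (-1, 1)
    obtain ⟨p₂, hc₂, hclose, hlt⟩ := hLI (-1) 1 p hp
      ⟨q, hq, by linarith⟩ (min δ d₀) hdpos
    have hdist : dist p₂ p < δ := by
      rw [dist_pi_lt_iff hδpos]
      intro i
      rw [Real.dist_eq]
      exact lt_of_lt_of_le (hclose i) (min_le_left _ _)
    have hfd := hδ hdist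
    rw [Real.dist_eq] at hfd
    have h1 := abs_lt.mp hfd
    have habsD : |pay lam p q (uvecX R S T P) - pay lam p q (uvecY R S T P)| =
        pay lam p q (uvecX R S T P) - pay lam p q (uvecY R S T P) := abs_of_pos hDpos
    have hf2pos : 0 < pay lam p₂ q (uvecX R S T P) - pay lam p₂ q (uvecY R S T P) := by
      rw [habsD] at h1
      linarith [h1.1]
    have hno2 := hno' p₂ hc₂ (fun i => lt_of_lt_of_le (hclose i) (min_le_right _ _))
    rw [abs_of_pos hf2pos, habsD] at hno2
    linarith
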